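/- For every q₀ ∈ (0, 1), ∫₁^{1/q₀} (1/η) J_{[η, 2η]} dη = 2 log 2 · (log(1/q₀))² + 2 (log 2)² · log(1/q₀) − (1/2) Σ_{n=1}^∞ ((−1)^n / n³) (1 − 4^{−n}) (1 − q₀^{2n}), the series converging absolutely. -/

import Mathlib

open Set intervalIntegral

/-- `J_{[a,b]} = 2 ∫_a^b log(1 + ξ²)/ξ dξ`. -/
noncomputable def Jab (a b : ℝ) : ℝ := 2 * ∫ ξ in a..b, Real.log (1 + ξ ^ 2) / ξ

/-- Auxiliary dilogarithm-type series: `F(t) = ∑ (-1)^n t^{2n+2}/(2(n+1)²)`. -/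
noncomputable def Fser (t : ℝ) : ℝ :=
  ∑' n : ℕ, (-1 : ℝ) ^ n * t ^ (2 * n + 2) / (2 * ((n : ℝ) + 1) ^ 2)

/-- Auxiliary trilogarithm-type series. -/
noncomputable def Phi (η : ℝ) : ℝ :=
  ∑' n : ℕ, (-1 : ℝ) ^ n * (1 - ((4 : ℝ)⁻¹) ^ (n + 1)) * (η⁻¹) ^ (2 * n + 2) /
    (2 * ((n : ℝ) + 1) ^ 3)

lemma summable_sq : Summable (fun n : ℕ => 1 / ((n : ℝ) + 1) ^ 2) := by
  have h := Real.summable_one_div_nat_pow (p := 2) |>.mpr (by norm_num)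
  have h2 := (summable_nat_add_iff 1).mpr h
  simpa using h2

lemma summable_cube : Summable (fun n : ℕ => 1 / ((n : ℝ) + 1) ^ 3) := by
  have h := Real.summable_one_div_nat_pow (p := 3) |>.mpr (by norm_num)
  have h2 := (summable_nat_add_iff 1).mpr h
  simpa using h2

lemma one_le_cast_succ (n : ℕ) : (1 : ℝ) ≤ (n : ℝ) + 1 := by
  have : (0 : ℝ) ≤ (n : ℝ) := Nat.cast_nonneg n
  linarith

lemma Fser_contOn : ContinuousOn Fser (Icc (-1 : ℝ) 1) := by
  apply continuousOn_tsum (u := fun n : ℕ => 1 / ((n : ℝ) + 1) ^ 2) _ summable_sq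
  · intro n x hx
    have hx1 : |x| ≤ 1 := abs_le.mpr ⟨hx.1, hx.2⟩
    have hnp : (0 : ℝ) < ((n : ℝ) + 1) ^ 2 := by positivity
    have h1 : |x| ^ (2 * n + 2) ≤ 1 := pow_le_one₀ (abs_nonneg x) hx1
    simp only [Real.norm_eq_abs, abs_div, abs_mul, abs_pow, abs_neg, abs_one, one_pow, one_mul]
    rw [abs_two, show |(n : ℝ) + 1| = (n : ℝ) + 1 from abs_of_pos (by positivity)]
    rw [div_le_div_iff₀ (by positivity) (by positivity)]
    nlinarith [mul_nonneg (sub_nonneg.mpr h1) hnp.le]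
  · intro n
    exact ((continuous_const.mul (continuous_pow _)).div_const _).continuousOn

lemma Fser_hasDerivAt {t : ℝ} (h0 : 0 < t) (h1 : t < 1) :
    HasDerivAt Fser (Real.log (1 + t ^ 2) / t) t := by
  set r : ℝ := (1 + t) / 2 with hr
  have hr0 : 0 < r := by positivity
  have htr : t < r := by simp only [hr]; linarith
  have hr1 : r < 1 := by simp only [hr]; linarith
  have hu : Summable (fun n : ℕ => r ^ (2 * n + 1)) := by
    have h := (summable_geometric_of_lt_one (by positivity : (0:ℝ) ≤ r ^ 2)
      (by nlinarith : r ^ 2 < 1)).mul_left r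
    exact h.congr fun n => by rw [← pow_mul]; ring
  have hg : ∀ n : ℕ, ∀ y ∈ Ioo (-r) r,
      HasDerivAt (fun y : ℝ => (-1 : ℝ) ^ n * y ^ (2 * n + 2) / (2 * ((n : ℝ) + 1) ^ 2))
        ((-1 : ℝ) ^ n * y ^ (2 * n + 1) / ((n : ℝ) + 1)) y := by
    intro n y _
    have h := (hasDerivAt_pow (2 * n + 2) y).const_mul ((-1 : ℝ) ^ n / (2 * ((n : ℝ) + 1) ^ 2))
    have hfun : (fun y : ℝ => (-1 : ℝ) ^ n / (2 * ((n : ℝ) + 1) ^ 2) * y ^ (2 * n + 2)) =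
        fun y : ℝ => (-1 : ℝ) ^ n * y ^ (2 * n + 2) / (2 * ((n : ℝ) + 1) ^ 2) := by
      funext z; ring
    rw [hfun] at h
    refine h.congr_deriv ?_
    have he : 2 * n + 2 - 1 = 2 * n + 1 := by omega
    rw [he]
    have hne : ((n : ℝ) + 1) ≠ 0 := by positivity
    push_cast
    field_simp
  have key : HasDerivAt (fun z : ℝ =>
      ∑' n : ℕ, (-1 : ℝ) ^ n * z ^ (2 * n + 2) / (2 * ((n : ℝ) + 1) ^ 2))
      (∑' n : ℕ, (-1 : ℝ) ^ n * t ^ (2 * n + 1) / ((n : ℝ) + 1)) t := by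
    apply hasDerivAt_tsum_of_isPreconnected hu isOpen_Ioo isPreconnected_Ioo hg
    · intro n y hy
      have hy' : |y| ≤ r := (abs_lt.mpr ⟨hy.1, hy.2⟩).le
      have h2 : |y| ^ (2 * n + 1) ≤ r ^ (2 * n + 1) := pow_le_pow_left₀ (abs_nonneg _) hy' _
      simp only [Real.norm_eq_abs, abs_div, abs_mul, abs_pow, abs_neg, abs_one, one_pow, one_mul]
      rw [abs_of_pos (by positivity : (0:ℝ) < (n : ℝ) + 1)]
      calc |y| ^ (2 * n + 1) / ((n : ℝ) + 1) ≤ |y| ^ (2 * n + 1) :=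
            div_le_self (by positivity) (one_le_cast_succ n)
        _ ≤ r ^ (2 * n + 1) := h2
    · exact ⟨by linarith, hr0⟩
    · have : (fun n : ℕ => (-1 : ℝ) ^ n * (0:ℝ) ^ (2 * n + 2) / (2 * ((n : ℝ) + 1) ^ 2)) =
          fun _ => (0 : ℝ) := by
        funext n; rw [zero_pow (by omega)]; ring
      rw [this]; exact summable_zero
    · exact ⟨by linarith, htr⟩
  have hne : t ≠ 0 := h0.ne'
  have habs : |(-(t ^ 2))| < 1 := by
    rw [abs_neg, abs_of_nonneg (by positivity)]; nlinarith
  have hs := (Real.hasSum_pow_div_log_of_abs_lt_one habs).mul_right (-(1 / t))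
  have heq : (fun n : ℕ => (-(t ^ 2)) ^ (n + 1) / ((n : ℕ) + 1 : ℝ) * (-(1 / t))) =
      fun n : ℕ => (-1 : ℝ) ^ n * t ^ (2 * n + 1) / ((n : ℝ) + 1) := by
    funext n
    have h4 : (-(t ^ 2)) ^ (n + 1) = (-1 : ℝ) ^ (n + 1) * t ^ (2 * n + 2) := by
      rw [neg_pow, ← pow_mul]; ring_nf
    rw [h4, pow_succ]
    field_simp
    ring
  rw [heq] at hs
  have hval : -Real.log (1 - -(t ^ 2)) * (-(1 / t)) = Real.log (1 + t ^ 2) / t := by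
    rw [sub_neg_eq_add]; ring
  rw [hval] at hs
  rw [← hs.tsum_eq]
  exact key

/-- Splitting the log. -/
lemma log_split {ξ : ℝ} (hξ : 0 < ξ) :
    Real.log (1 + ξ ^ 2) = 2 * Real.log ξ + Real.log (1 + (ξ⁻¹) ^ 2) := by
  have hne : ξ ≠ 0 := hξ.ne'
  have h : (1 + ξ ^ 2) = ξ ^ 2 * (1 + (ξ⁻¹) ^ 2) := by field_simp <;> ring
  rw [h, Real.log_mul (pow_ne_zero 2 hne) (by positivity), Real.log_pow]
  push_cast; ring

noncomputable def Hfun (ξ : ℝ) : ℝ := (Real.log ξ) ^ 2 - Fser ξ⁻¹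

lemma Hfun_hasDerivAt {x : ℝ} (hx : 1 < x) :
    HasDerivAt Hfun (Real.log (1 + x ^ 2) / x) x := by
  have hx0 : (0 : ℝ) < x := lt_trans one_pos hx
  have hne : x ≠ 0 := hx0.ne'
  have h1 : HasDerivAt (fun ξ : ℝ => (Real.log ξ) ^ 2) (2 * Real.log x * x⁻¹) x := by
    have h := (Real.hasDerivAt_log hne).pow 2
    refine h.congr_deriv ?_
    norm_num
  have ht0 : (0 : ℝ) < x⁻¹ := by positivity
  have ht1 : x⁻¹ < 1 := inv_lt_one_of_one_lt₀ hx
  have h2 : HasDerivAt (fun ξ : ℝ => Fser ξ⁻¹)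
      (Real.log (1 + (x⁻¹) ^ 2) / x⁻¹ * (-(x ^ 2)⁻¹)) x :=
    (Fser_hasDerivAt ht0 ht1).comp x (hasDerivAt_inv hne)
  have h := h1.sub h2
  refine h.congr_deriv ?_
  rw [log_split hx0]
  field_simp
  ring

lemma inner_eval {η : ℝ} (hη : 1 ≤ η) :
    ∫ ξ in η..(2 * η), Real.log (1 + ξ ^ 2) / ξ = Hfun (2 * η) - Hfun η := by
  have hη0 : 0 < η := lt_of_lt_of_le one_pos hη
  apply integral_eq_sub_of_hasDeriv_right_of_le (by linarith)
  · apply ContinuousOn.sub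
    · apply ContinuousOn.pow
      apply Real.continuousOn_log.mono
      intro ξ hξ
      have : 0 < ξ := lt_of_lt_of_le hη0 hξ.1
      simpa using this.ne'
    · apply Fser_contOn.comp
      · exact continuousOn_id.inv₀ fun ξ hξ => (lt_of_lt_of_le hη0 hξ.1).ne'
      · intro ξ hξ
        have hξ0 : 0 < ξ := lt_of_lt_of_le hη0 hξ.1
        have hξ1 : 1 ≤ ξ := le_trans hη hξ.1
        refine ⟨?_, inv_le_one_of_one_le₀ hξ1⟩
        have : (0:ℝ) < ξ⁻¹ := by positivity
        linarith
  · intro x hx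
    exact (Hfun_hasDerivAt (lt_of_le_of_lt hη hx.1)).hasDerivWithinAt
  · apply ContinuousOn.intervalIntegrable
    apply ContinuousOn.div
    · apply ContinuousOn.log
      · exact (continuous_const.add (continuous_pow 2)).continuousOn
      · intro ξ _; positivity
    · exact continuousOn_id
    · intro ξ hξ
      rw [uIcc_of_le (by linarith)] at hξ
      exact (lt_of_lt_of_le hη0 hξ.1).ne'

lemma Jab_eval {η : ℝ} (hη : 1 ≤ η) :
    Jab η (2 * η) = 2 * (Real.log 2) ^ 2 + 4 * Real.log 2 * Real.log η +
      2 * (Fser η⁻¹ - Fser (2 * η)⁻¹) := by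
  have hη0 : 0 < η := lt_of_lt_of_le one_pos hη
  rw [Jab, inner_eval hη]
  unfold Hfun
  rw [Real.log_mul two_ne_zero hη0.ne']
  ring

lemma Phi_contOn : ContinuousOn Phi (Ici (1 : ℝ)) := by
  apply continuousOn_tsum (u := fun n : ℕ => 1 / ((n : ℝ) + 1) ^ 3) _ summable_cube
  · intro n x hx
    have hx1 : (1 : ℝ) ≤ x := hx
    have hq : (0 : ℝ) ≤ ((4 : ℝ)⁻¹) ^ (n + 1) := by positivity
    have hq1 : ((4 : ℝ)⁻¹) ^ (n + 1) ≤ 1 := pow_le_one₀ (by norm_num) (by norm_num)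
    have b1 : |1 - ((4 : ℝ)⁻¹) ^ (n + 1)| ≤ 1 := abs_le.mpr ⟨by linarith, by linarith⟩
    have hinv : |x⁻¹| ≤ 1 := by
      rw [abs_of_nonneg (by positivity)]; exact inv_le_one_of_one_le₀ hx1
    have b2 : |x⁻¹| ^ (2 * n + 2) ≤ 1 := pow_le_one₀ (abs_nonneg _) hinv
    have hb : |1 - ((4 : ℝ)⁻¹) ^ (n + 1)| * |x⁻¹| ^ (2 * n + 2) ≤ 1 := by
      nlinarith [abs_nonneg (1 - ((4 : ℝ)⁻¹) ^ (n + 1)),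
        pow_nonneg (abs_nonneg x⁻¹) (2 * n + 2)]
    simp only [Real.norm_eq_abs, abs_div, abs_mul, abs_pow, abs_neg, abs_one, one_pow, one_mul]
    rw [abs_two, show |(n : ℝ) + 1| = (n : ℝ) + 1 from abs_of_pos (by positivity)]
    rw [div_le_div_iff₀ (by positivity) (by positivity)]
    nlinarith [pow_pos (by positivity : (0:ℝ) < (n : ℝ) + 1) 3]
  · intro n
    apply ContinuousOn.div_const
    apply continuousOn_const.mul
    exact (continuousOn_id.inv₀ fun x hx => (lt_of_lt_of_le one_pos hx).ne').pow _

lemma Fser_summable {t : ℝ} (ht : |t| ≤ 1) :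
    Summable (fun n : ℕ => (-1 : ℝ) ^ n * t ^ (2 * n + 2) / (2 * ((n : ℝ) + 1) ^ 2)) := by
  apply Summable.of_norm_bounded summable_sq
  intro n
  have h1 : |t| ^ (2 * n + 2) ≤ 1 := pow_le_one₀ (abs_nonneg t) ht
  simp only [Real.norm_eq_abs, abs_div, abs_mul, abs_pow, abs_neg, abs_one, one_pow, one_mul]
  rw [abs_two, show |(n : ℝ) + 1| = (n : ℝ) + 1 from abs_of_pos (by positivity)]
  rw [div_le_div_iff₀ (by positivity) (by positivity)]
  nlinarith [pow_pos (by positivity : (0:ℝ) < (n : ℝ) + 1) 2,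
    mul_nonneg (sub_nonneg.mpr h1) (pow_pos (by positivity : (0:ℝ) < (n : ℝ) + 1) 2).le]

lemma Phi_summable {t : ℝ} (ht : |t| ≤ 1) :
    Summable (fun n : ℕ => (-1 : ℝ) ^ n * (1 - ((4 : ℝ)⁻¹) ^ (n + 1)) * t ^ (2 * n + 2) /
      (2 * ((n : ℝ) + 1) ^ 3)) := by
  apply Summable.of_norm_bounded summable_cube
  intro n
  have hq : (0 : ℝ) ≤ ((4 : ℝ)⁻¹) ^ (n + 1) := by positivity
  have hq1 : ((4 : ℝ)⁻¹) ^ (n + 1) ≤ 1 := pow_le_one₀ (by norm_num) (by norm_num)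
  have b1 : |1 - ((4 : ℝ)⁻¹) ^ (n + 1)| ≤ 1 := abs_le.mpr ⟨by linarith, by linarith⟩
  have b2 : |t| ^ (2 * n + 2) ≤ 1 := pow_le_one₀ (abs_nonneg t) ht
  have hb : |1 - ((4 : ℝ)⁻¹) ^ (n + 1)| * |t| ^ (2 * n + 2) ≤ 1 := by
    nlinarith [abs_nonneg (1 - ((4 : ℝ)⁻¹) ^ (n + 1)), pow_nonneg (abs_nonneg t) (2 * n + 2)]
  simp only [Real.norm_eq_abs, abs_div, abs_mul, abs_pow, abs_neg, abs_one, one_pow, one_mul]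
  rw [abs_two, show |(n : ℝ) + 1| = (n : ℝ) + 1 from abs_of_pos (by positivity)]
  rw [div_le_div_iff₀ (by positivity) (by positivity)]
  nlinarith [pow_pos (by positivity : (0:ℝ) < (n : ℝ) + 1) 3]

lemma half_pow (n : ℕ) {x : ℝ} (hx : x ≠ 0) :
    ((2 * x)⁻¹) ^ (2 * n + 2) = ((4 : ℝ)⁻¹) ^ (n + 1) * (x⁻¹) ^ (2 * n + 2) := by
  rw [mul_inv, mul_pow]
  congr 1
  have h : 2 * n + 2 = 2 * (n + 1) := by ring
  rw [h, pow_mul]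
  norm_num

lemma Phi_hasDerivAt {x : ℝ} (hx : 1 < x) :
    HasDerivAt Phi (-(2 / x) * (Fser x⁻¹ - Fser (2 * x)⁻¹)) x := by
  have hx0 : (0 : ℝ) < x := lt_trans one_pos hx
  have hne : x ≠ 0 := hx0.ne'
  set r : ℝ := (1 + x) / 2 with hr
  have hr1 : 1 < r := by simp only [hr]; linarith
  have hrx : r < x := by simp only [hr]; linarith
  have hr0 : (0 : ℝ) < r := by linarith
  set g' : ℕ → ℝ → ℝ := fun n y =>
    -((-1 : ℝ) ^ n * (1 - ((4 : ℝ)⁻¹) ^ (n + 1)) * (y⁻¹) ^ (2 * n + 3) / ((n : ℝ) + 1) ^ 2)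
    with hg'def
  have hu : Summable (fun n : ℕ => (r⁻¹) ^ (2 * n + 3)) := by
    have h := (summable_geometric_of_lt_one (by positivity : (0:ℝ) ≤ (r⁻¹) ^ 2)
      (by nlinarith [inv_lt_one_of_one_lt₀ hr1, inv_pos.mpr hr0] : (r⁻¹) ^ 2 < 1)).mul_left
      ((r⁻¹) ^ 3)
    exact h.congr fun n => by rw [← pow_mul, ← pow_add]; congr 1; ring
  have hg : ∀ n : ℕ, ∀ y ∈ Ioi r,
      HasDerivAt (fun y : ℝ => (-1 : ℝ) ^ n * (1 - ((4 : ℝ)⁻¹) ^ (n + 1)) * (y⁻¹) ^ (2 * n + 2) /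
        (2 * ((n : ℝ) + 1) ^ 3)) (g' n y) y := by
    intro n y hy
    have hy0 : (0 : ℝ) < y := lt_trans hr0 hy
    have hyne : y ≠ 0 := hy0.ne'
    have h := ((hasDerivAt_inv hyne).pow (2 * n + 2)).const_mul
      ((-1 : ℝ) ^ n * (1 - ((4 : ℝ)⁻¹) ^ (n + 1)) / (2 * ((n : ℝ) + 1) ^ 3))
    have hfun : (fun y : ℝ => (-1 : ℝ) ^ n * (1 - ((4 : ℝ)⁻¹) ^ (n + 1)) /
          (2 * ((n : ℝ) + 1) ^ 3) * (y⁻¹) ^ (2 * n + 2)) =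
        fun y : ℝ => (-1 : ℝ) ^ n * (1 - ((4 : ℝ)⁻¹) ^ (n + 1)) * (y⁻¹) ^ (2 * n + 2) /
          (2 * ((n : ℝ) + 1) ^ 3) := by
      funext z; ring
    simp only [Pi.pow_apply] at h
    rw [hfun] at h
    refine h.congr_deriv ?_
    simp only [hg'def]
    have he : 2 * n + 2 - 1 = 2 * n + 1 := by omega
    rw [he]
    have h3 : (y⁻¹) ^ (2 * n + 3) = (y⁻¹) ^ (2 * n + 1) * (y ^ 2)⁻¹ := by
      rw [← inv_pow, ← pow_add]
    rw [h3]
    have hne2 : ((n : ℝ) + 1) ≠ 0 := by positivity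
    push_cast
    field_simp
  have key : HasDerivAt Phi (∑' n : ℕ, g' n x) x := by
    apply hasDerivAt_tsum_of_isPreconnected hu isOpen_Ioi isPreconnected_Ioi hg
    · intro n y hy
      have hy1 : 1 < y := lt_trans hr1 hy
      have hy0 : (0 : ℝ) < y := lt_trans one_pos hy1
      have hq : (0 : ℝ) ≤ ((4 : ℝ)⁻¹) ^ (n + 1) := by positivity
      have hq1 : ((4 : ℝ)⁻¹) ^ (n + 1) ≤ 1 := pow_le_one₀ (by norm_num) (by norm_num)
      have b1 : |1 - ((4 : ℝ)⁻¹) ^ (n + 1)| ≤ 1 := abs_le.mpr ⟨by linarith, by linarith⟩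
      have hyr : y⁻¹ ≤ r⁻¹ := inv_anti₀ hr0 hy.le
      have b2 : |y⁻¹| ^ (2 * n + 3) ≤ (r⁻¹) ^ (2 * n + 3) := by
        apply pow_le_pow_left₀ (abs_nonneg _)
        rw [abs_of_nonneg (by positivity)]
        exact hyr
      have h3 : (1 : ℝ) ≤ ((n : ℝ) + 1) ^ 2 := by
        nlinarith [one_le_cast_succ n]
      simp only [hg'def, norm_neg, Real.norm_eq_abs, abs_div, abs_mul, abs_pow, abs_neg,
        abs_one, one_pow, one_mul]
      rw [show |(n : ℝ) + 1| = (n : ℝ) + 1 from abs_of_pos (by positivity)]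
      calc |1 - ((4 : ℝ)⁻¹) ^ (n + 1)| * |y⁻¹| ^ (2 * n + 3) / ((n : ℝ) + 1) ^ 2
          ≤ |1 - ((4 : ℝ)⁻¹) ^ (n + 1)| * |y⁻¹| ^ (2 * n + 3) :=
            div_le_self (by positivity) h3
        _ ≤ 1 * (r⁻¹) ^ (2 * n + 3) :=
            mul_le_mul b1 b2 (by positivity) zero_le_one
        _ = (r⁻¹) ^ (2 * n + 3) := one_mul _
    · exact hrx
    · apply Phi_summable
      rw [abs_of_nonneg (by positivity)]
      exact inv_le_one_of_one_le₀ hx.le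
    · exact hrx
  have hsum : (∑' n : ℕ, g' n x) = -(2 / x) * (Fser x⁻¹ - Fser (2 * x)⁻¹) := by
    have hxi : |x⁻¹| ≤ 1 := by
      rw [abs_of_nonneg (by positivity)]; exact inv_le_one_of_one_le₀ hx.le
    have h2xi : |(2 * x)⁻¹| ≤ 1 := by
      rw [abs_of_nonneg (by positivity)]
      apply inv_le_one_of_one_le₀; linarith
    have hsA := (Fser_summable hxi).hasSum
    have hsB := (Fser_summable h2xi).hasSum
    have h := (hsA.sub hsB).mul_left (-(2 / x))
    have heq : (fun n : ℕ => -(2 / x) *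
        ((-1 : ℝ) ^ n * (x⁻¹) ^ (2 * n + 2) / (2 * ((n : ℝ) + 1) ^ 2) -
         (-1 : ℝ) ^ n * ((2 * x)⁻¹) ^ (2 * n + 2) / (2 * ((n : ℝ) + 1) ^ 2))) =
        fun n => g' n x := by
      funext n
      simp only [hg'def]
      rw [half_pow n hne]
      have h5 : (x⁻¹) ^ (2 * n + 3) = (x⁻¹) ^ (2 * n + 2) * x⁻¹ := by rw [← pow_succ]
      rw [h5]
      have hne2 : ((n : ℝ) + 1) ≠ 0 := by positivity
      field_simp
    rw [← heq] at *
    exact (h.tsum_eq).trans rfl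
  rw [hsum] at key
  exact key

lemma outer_eval {Q : ℝ} (hQ : 1 < Q) :
    (∫ η in (1 : ℝ)..Q, η⁻¹ * (2 * (Real.log 2) ^ 2 + 4 * Real.log 2 * Real.log η +
        2 * (Fser η⁻¹ - Fser (2 * η)⁻¹))) =
      2 * (Real.log 2) ^ 2 * Real.log Q + 2 * Real.log 2 * (Real.log Q) ^ 2 +
        (Phi 1 - Phi Q) := by
  have hlogc : ContinuousOn Real.log (Icc (1:ℝ) Q) := by
    apply Real.continuousOn_log.mono
    intro ξ hξ
    have : (0:ℝ) < ξ := lt_of_lt_of_le one_pos hξ.1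
    simpa using this.ne'
  have h := integral_eq_sub_of_hasDeriv_right_of_le (a := 1) (b := Q)
    (f := fun η => 2 * (Real.log 2) ^ 2 * Real.log η + 2 * Real.log 2 * (Real.log η) ^ 2 - Phi η)
    (f' := fun η => η⁻¹ * (2 * (Real.log 2) ^ 2 + 4 * Real.log 2 * Real.log η +
        2 * (Fser η⁻¹ - Fser (2 * η)⁻¹))) hQ.le ?_ ?_ ?_
  · rw [h]
    simp only [Real.log_one]
    ring
  · apply ContinuousOn.sub
    · exact (continuousOn_const.mul hlogc).add (continuousOn_const.mul (hlogc.pow 2))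
    · exact Phi_contOn.mono fun x hx => hx.1
  · intro x hx
    have hx1 : 1 < x := hx.1
    have hx0 : (0:ℝ) < x := lt_trans one_pos hx1
    have hne : x ≠ 0 := hx0.ne'
    have d1 : HasDerivAt (fun η : ℝ => 2 * (Real.log 2) ^ 2 * Real.log η)
        (2 * (Real.log 2) ^ 2 * x⁻¹) x := (Real.hasDerivAt_log hne).const_mul _
    have d2 : HasDerivAt (fun η : ℝ => 2 * Real.log 2 * (Real.log η) ^ 2)
        (2 * Real.log 2 * (2 * Real.log x * x⁻¹)) x := by
      have h2 := ((Real.hasDerivAt_log hne).pow 2).const_mul (2 * Real.log 2)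
      refine h2.congr_deriv ?_
      norm_num
    have d3 := Phi_hasDerivAt hx1
    have hD := (d1.add d2).sub d3
    apply HasDerivAt.hasDerivWithinAt
    refine hD.congr_deriv ?_
    field_simp
    ring
  · apply ContinuousOn.intervalIntegrable
    rw [uIcc_of_le hQ.le]
    have hpos : ∀ ξ ∈ Icc (1:ℝ) Q, (0:ℝ) < ξ := fun ξ hξ => lt_of_lt_of_le one_pos hξ.1
    apply ContinuousOn.mul
    · exact continuousOn_id.inv₀ fun ξ hξ => (hpos ξ hξ).ne'
    · apply ContinuousOn.add
      · exact continuousOn_const.add (continuousOn_const.mul hlogc)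
      · apply continuousOn_const.mul
        apply ContinuousOn.sub
        · apply Fser_contOn.comp
          · exact continuousOn_id.inv₀ fun ξ hξ => (hpos ξ hξ).ne'
          · intro ξ hξ
            have h0 := hpos ξ hξ
            refine ⟨?_, inv_le_one_of_one_le₀ hξ.1⟩
            have : (0:ℝ) < ξ⁻¹ := by positivity
            linarith
        · apply Fser_contOn.comp
          · exact (continuousOn_const.mul continuousOn_id).inv₀ fun ξ hξ => by
              have := hpos ξ hξ
              show (2:ℝ) * ξ ≠ 0
              positivity
          · intro ξ hξ
            have h0 := hpos ξ hξ
            refine ⟨?_, inv_le_one_of_one_le₀ (by linarith [hξ.1])⟩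
            have : (0:ℝ) < (2 * ξ)⁻¹ := by positivity
            linarith

/-- **Evaluation of `∫₁^{1/q₀} (1/η) J_{[η,2η]} dη`.** For `0 < q₀ < 1`,
`∫₁^{1/q₀} (1/η) J_{[η,2η]} dη = 2 log 2 (log(1/q₀))² + 2 (log 2)² log(1/q₀)
  - (1/2) Σ_{n≥1} ((-1)^n/n³)(1 - 4^{-n})(1 - q₀^{2n})`,
the series converging absolutely. -/
theorem stmt_11 (q₀ : ℝ) (h0 : 0 < q₀) (h1 : q₀ < 1) :
    Summable (fun n : ℕ =>
      |((-1 : ℝ) ^ (n + 1) / ((n : ℝ) + 1) ^ 3) * (1 - (4 : ℝ) ^ (-((n : ℤ) + 1))) *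
        (1 - q₀ ^ (2 * (n + 1)))|) ∧
    (∫ η in (1 : ℝ)..(1 / q₀), (1 / η) * Jab η (2 * η)) =
      2 * Real.log 2 * (Real.log (1 / q₀)) ^ 2 +
        2 * (Real.log 2) ^ 2 * Real.log (1 / q₀) -
        (1 / 2) * ∑' n : ℕ, ((-1 : ℝ) ^ (n + 1) / ((n : ℝ) + 1) ^ 3) *
          (1 - (4 : ℝ) ^ (-((n : ℤ) + 1))) * (1 - q₀ ^ (2 * (n + 1))) := by
  have hQ : 1 < 1 / q₀ := by rw [lt_div_iff₀ h0]; linarith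
  have hzp : ∀ n : ℕ, (4 : ℝ) ^ (-((n : ℤ) + 1)) = ((4 : ℝ)⁻¹) ^ (n + 1) := by
    intro n
    have h : (-((n : ℤ) + 1)) = -(((n + 1 : ℕ)) : ℤ) := by push_cast; ring
    rw [h, zpow_neg, zpow_natCast, ← inv_pow]
  have hqpow : ∀ n : ℕ, (0:ℝ) ≤ q₀ ^ (2 * (n + 1)) ∧ q₀ ^ (2 * (n + 1)) ≤ 1 :=
    fun n => ⟨by positivity, pow_le_one₀ h0.le h1.le⟩
  constructor
  · apply Summable.of_nonneg_of_le (fun n => abs_nonneg _) _ summable_cube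
    intro n
    have hq : (0 : ℝ) ≤ ((4 : ℝ)⁻¹) ^ (n + 1) := by positivity
    have hq1 : ((4 : ℝ)⁻¹) ^ (n + 1) ≤ 1 := pow_le_one₀ (by norm_num) (by norm_num)
    have b1 : |1 - ((4 : ℝ)⁻¹) ^ (n + 1)| ≤ 1 := abs_le.mpr ⟨by linarith, by linarith⟩
    have b2 : |1 - q₀ ^ (2 * (n + 1))| ≤ 1 :=
      abs_le.mpr ⟨by linarith [(hqpow n).2], by linarith [(hqpow n).1]⟩
    rw [hzp n, abs_mul, abs_mul, abs_div, abs_pow, abs_neg, abs_one, one_pow,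
      abs_of_pos (by positivity : (0:ℝ) < ((n : ℝ) + 1) ^ 3)]
    calc 1 / ((n : ℝ) + 1) ^ 3 * |1 - ((4 : ℝ)⁻¹) ^ (n + 1)| * |1 - q₀ ^ (2 * (n + 1))|
        ≤ 1 / ((n : ℝ) + 1) ^ 3 * 1 * 1 := by
          apply mul_le_mul _ b2 (abs_nonneg _) (by positivity)
          apply mul_le_mul le_rfl b1 (abs_nonneg _) (by positivity)
      _ = 1 / ((n : ℝ) + 1) ^ 3 := by ring
  · have hEq : EqOn (fun η : ℝ => (1 / η) * Jab η (2 * η))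
        (fun η : ℝ => η⁻¹ * (2 * (Real.log 2) ^ 2 + 4 * Real.log 2 * Real.log η +
          2 * (Fser η⁻¹ - Fser (2 * η)⁻¹))) (uIcc 1 (1 / q₀)) := by
      intro η hη
      rw [uIcc_of_le hQ.le] at hη
      simp only
      rw [one_div, Jab_eval hη.1]
    rw [intervalIntegral.integral_congr hEq, outer_eval hQ]
    have hsum : Phi 1 - Phi (1 / q₀) =
        -(1 / 2) * ∑' n : ℕ, ((-1 : ℝ) ^ (n + 1) / ((n : ℝ) + 1) ^ 3) *
          (1 - (4 : ℝ) ^ (-((n : ℤ) + 1))) * (1 - q₀ ^ (2 * (n + 1))) := by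
      have hq1 : |(1:ℝ)| ≤ 1 := by norm_num
      have hq2 : |q₀| ≤ 1 := by rw [abs_of_pos h0]; linarith
      have hΦ1 := Phi_summable hq1
      have hΦq := Phi_summable hq2
      have e1 : Phi 1 = ∑' n : ℕ, (-1 : ℝ) ^ n * (1 - ((4 : ℝ)⁻¹) ^ (n + 1)) *
          (1 : ℝ) ^ (2 * n + 2) / (2 * ((n : ℝ) + 1) ^ 3) := by
        unfold Phi; simp only [inv_one]
      have e2 : Phi (1 / q₀) = ∑' n : ℕ, (-1 : ℝ) ^ n * (1 - ((4 : ℝ)⁻¹) ^ (n + 1)) *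
          q₀ ^ (2 * n + 2) / (2 * ((n : ℝ) + 1) ^ 3) := by
        unfold Phi; simp only [one_div, inv_inv]
      rw [e1, e2, ← Summable.tsum_sub hΦ1 hΦq, ← tsum_mul_left]
      apply tsum_congr
      intro n
      rw [hzp n]
      have hne2 : ((n : ℝ) + 1) ≠ 0 := by positivity
      have h2n : q₀ ^ (2 * (n + 1)) = q₀ ^ (2 * n + 2) := by ring
      rw [h2n]
      field_simp
      try ring
    rw [hsum]
    ring
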